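/- The function R_DPC(t) = g(2) − g((1−t)²/(1+t²)) − log₂(1+t²), with g as above, attains its maximum on [0,1] at an interior point: there exists t* ∈ (0,1) with R_DPC(t*) > R_DPC(1) and R_DPC(t*) > R_DPC(0). -/
import Mathlib


/-- `g(N) = (N+1)log₂(N+1) − N log₂ N` for `N > 0`, and `g(0) = 0`. -/
noncomputable def g (N : ℝ) : ℝ :=
  if N = 0 then 0 else (N + 1) * Real.logb 2 (N + 1) - N * Real.logb 2 N

/-- The dirty-paper coding rate for the pure-loss bosonic channel with
`N_A = N_S = 2`, `η = 1/2`, `N_E = 0`. -/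
noncomputable def RDPC (t : ℝ) : ℝ :=
  g 2 - g ((1 - t) ^ 2 / (1 + t ^ 2)) - Real.logb 2 (1 + t ^ 2)

lemma pow_log_lt {a b : ℝ} {m n : ℕ} (ha : 0 < a) (hb : 0 < b)
    (h : a ^ m < b ^ n) : (m : ℝ) * Real.logb 2 a < (n : ℝ) * Real.logb 2 b := by
  have h1 : Real.logb 2 (a ^ m) < Real.logb 2 (b ^ n) :=
    Real.logb_lt_logb one_lt_two (pow_pos ha m) h
  rwa [Real.logb_pow, Real.logb_pow] at h1

lemma key1 : (42 : ℝ) * Real.logb 2 42 < 41 * Real.logb 2 50 := by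
  have := pow_log_lt (a := 42) (b := 50) (m := 42) (n := 41)
    (by norm_num) (by norm_num) (by norm_num)
  exact_mod_cast this

lemma key2 : (42 : ℝ) * Real.logb 2 42 < 41 * Real.logb 2 100 := by
  have := pow_log_lt (a := 42) (b := 100) (m := 42) (n := 41)
    (by norm_num) (by norm_num) (by norm_num)
  exact_mod_cast this

/-- The maximum of the dirty-paper coding rate on `[0,1]` is attained at an
interior point; in particular the MMSE coefficient `t = 1` is not optimal. -/
theorem RDPC_interior_max :
    ∃ t : ℝ, t ∈ Set.Ioo (0 : ℝ) 1 ∧ RDPC 1 < RDPC t ∧ RDPC 0 < RDPC t := by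
  refine ⟨4/5, by norm_num, ?_, ?_⟩ <;>
  · unfold RDPC g
    norm_num
    have h1 : Real.logb 2 ((42:ℝ)/41) = Real.logb 2 42 - Real.logb 2 41 := by
      rw [Real.logb_div (by norm_num) (by norm_num)]
    have h2 : Real.logb 2 ((1:ℝ)/41) = - Real.logb 2 41 := by
      rw [show ((1:ℝ)/41) = (41:ℝ)⁻¹ by norm_num, Real.logb_inv]
    have h3 : Real.logb 2 ((41:ℝ)/25) = Real.logb 2 41 - Real.logb 2 25 := by
      rw [Real.logb_div (by norm_num) (by norm_num)]
    have h4 : Real.logb 2 (50:ℝ) = 1 + Real.logb 2 25 := by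
      rw [show (50:ℝ) = 2 * 25 by norm_num,
        Real.logb_mul (by norm_num) (by norm_num), Real.logb_self_eq_one] <;> norm_num
    have h5 : Real.logb 2 (100:ℝ) = 2 + Real.logb 2 25 := by
      rw [show (100:ℝ) = 2 * (2 * 25) by norm_num,
        Real.logb_mul (by norm_num) (by norm_num),
        Real.logb_mul (by norm_num) (by norm_num), Real.logb_self_eq_one] <;> ring_nf <;> norm_num
    have h6 : Real.logb 2 (2:ℝ) = 1 := by
      rw [Real.logb_self_eq_one] <;> norm_num
    have k1 := key1
    have k2 := key2
    rw [h4] at k1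
    rw [h5] at k2
    simp only [h1, h2, h3, h6]
    nlinarith [k1, k2]
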